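/- Let n ≥ 1. Let λ_1 = 1 and λ_2, …, λ_n be real numbers with 1, λ_2, …, λ_n linearly independent over ℚ, and let θ_1, θ_2 be real numbers such that both families π, θ_1, λ_2θ_1, …, λ_nθ_1 and π, θ_2, λ_2θ_2, …, λ_nθ_2 are linearly independent over ℚ. Let Θ ∈ M(n, 2; ℝ) be the matrix with entries Θ_{ij} = λ_i θ_j. Then the orbit { [Θ·A] : A ∈ SL(2, ℤ) } is dense in M(n, 2; 𝕋) = 𝕋^{2n}. (Direct, Ratner-free proof of the main density theorem in genus one for this class of representations.) -/

import Mathlib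

open Matrix MeasureTheory Set Submodule Function
open scoped Real ComplexConjugate

noncomputable section

namespace GenusOneAux

local instance fact_two_pi_pos : Fact (0 < 2 * Real.pi) := ⟨by positivity⟩

variable {n : ℕ}

/-- The complex absolute value, as an absolute value. -/
def Complex.abs : AbsoluteValue ℂ ℝ where
  toFun z := ‖z‖
  map_mul' := norm_mul
  nonneg' := norm_nonneg
  eq_zero' _ := norm_eq_zero
  add_le' := norm_add_le

lemma Complex.abs_exp_ofReal_mul_I (x : ℝ) : Complex.abs (Complex.exp (x * Complex.I)) = 1 :=
  Complex.norm_exp_ofReal_mul_I x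

lemma Complex.abs_natCast (k : ℕ) : Complex.abs (k : ℂ) = k := by
  show ‖(k : ℂ)‖ = k
  simp

lemma Complex.abs_ofReal (r : ℝ) : Complex.abs (r : ℂ) = |r| := by
  show ‖(r : ℂ)‖ = |r|
  simp

/-- Characters of the `n`-torus. -/
def chr (m : Fin n → ℤ) : C((Fin n → AddCircle (2 * Real.pi)), ℂ) :=
  ⟨fun x => ∏ i, fourier (m i) (x i), by
    apply continuous_finset_prod
    intro i _
    exact (fourier (m i)).continuous.comp (continuous_apply i)⟩

lemma chr_apply (m : Fin n → ℤ) (x : Fin n → AddCircle (2 * Real.pi)) :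
    chr m x = ∏ i, fourier (m i) (x i) := rfl

lemma chr_zero : (chr (0 : Fin n → ℤ)) = 1 := by
  ext x
  simp [chr_apply, fourier_zero]

lemma chr_mul (m m' : Fin n → ℤ) : chr m * chr m' = chr (m + m') := by
  ext x
  simp [chr_apply, ← Finset.prod_mul_distrib, fourier_add]

lemma chr_star (m : Fin n → ℤ) : star (chr m) = chr (-m) := by
  ext x
  simp [chr_apply, fourier_neg, map_prod]

/-- The star subalgebra generated by the characters. -/
def chrAlg : StarSubalgebra ℂ C((Fin n → AddCircle (2 * Real.pi)), ℂ) where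
  toSubalgebra := Algebra.adjoin ℂ (Set.range chr)
  star_mem' := by
    show Algebra.adjoin ℂ (Set.range (chr (n := n))) ≤
      star (Algebra.adjoin ℂ (Set.range (chr (n := n))))
    refine Algebra.adjoin_le ?_
    rintro - ⟨m, rfl⟩
    rw [SetLike.mem_coe, Subalgebra.mem_star_iff, chr_star]
    exact Algebra.subset_adjoin ⟨-m, rfl⟩

lemma chrAlg_coe :
    Subalgebra.toSubmodule (chrAlg (n := n)).toSubalgebra = span ℂ (Set.range chr) := by
  apply Algebra.adjoin_eq_span_of_subset
  refine Subset.trans ?_ Submodule.subset_span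
  intro x hx
  refine Submonoid.closure_induction (fun x h => h) ⟨0, chr_zero⟩ ?_ hx
  rintro x y - - ⟨m, rfl⟩ ⟨m', rfl⟩
  exact ⟨m + m', (chr_mul m m').symm⟩

lemma chrAlg_separatesPoints : (chrAlg (n := n)).SeparatesPoints := by
  intro x y hxy
  obtain ⟨i, hi⟩ : ∃ i, x i ≠ y i := by
    by_contra h
    push_neg at h
    exact hxy (funext h)
  refine ⟨_, ⟨chr (Pi.single i 1), Algebra.subset_adjoin ⟨Pi.single i 1, rfl⟩, rfl⟩, ?_⟩
  have key : ∀ z : Fin n → AddCircle (2 * Real.pi),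
      chr (Pi.single i 1) z = AddCircle.toCircle (z i) := by
    intro z
    rw [chr_apply, Finset.prod_eq_single i]
    · simp [Pi.single_eq_same, fourier_one]
    · intro j _ hj
      simp [Pi.single_eq_of_ne hj, fourier_zero]
    · simp
  dsimp only
  rw [key, key]
  intro h
  rw [Circle.coe_inj] at h
  exact hi (AddCircle.injective_toCircle (by positivity : (0:ℝ) < 2 * Real.pi).ne' h)

lemma span_chr_closure_eq_top :
    (span ℂ (Set.range (chr (n := n)))).topologicalClosure = ⊤ := by
  rw [← chrAlg_coe]
  exact congr_arg (Subalgebra.toSubmodule <| StarSubalgebra.toSubalgebra ·)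
    (ContinuousMap.starSubalgebra_topologicalClosure_eq_top_of_separatesPoints chrAlg
      chrAlg_separatesPoints)

lemma integral_fourier_eq_zero {m : ℤ} (hm : m ≠ 0) :
    ∫ x : AddCircle (2 * Real.pi), fourier m x = 0 := by
  rw [← AddCircle.intervalIntegral_preimage (2 * Real.pi) 0 (fun z => fourier m z)]
  have key : ∀ x : ℝ, fourier m (x : AddCircle (2 * Real.pi))
      = Complex.exp (((m : ℂ) * Complex.I) * x) := by
    intro x
    rw [fourier_coe_apply]
    congr 1
    have hπ : (Real.pi : ℂ) ≠ 0 := by exact_mod_cast Real.pi_ne_zero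
    field_simp
    push_cast
    ring
  have hc : (m : ℂ) * Complex.I ≠ 0 := by
    simp [Complex.I_ne_zero, hm]
  calc ∫ x in (0:ℝ)..(0 + 2 * Real.pi), fourier m (x : AddCircle (2 * Real.pi))
      = ∫ x in (0:ℝ)..(0 + 2 * Real.pi), Complex.exp (((m : ℂ) * Complex.I) * x) := by
        simp_rw [key]
    _ = 0 := by
        rw [integral_exp_mul_complex hc]
        have h1 : Complex.exp (((m : ℂ) * Complex.I) * ((0 : ℝ) + 2 * Real.pi)) = 1 := by
          rw [show ((m : ℂ) * Complex.I) * (((0 : ℝ) : ℂ) + 2 * (Real.pi : ℂ))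
              = (m : ℂ) * (2 * (Real.pi : ℂ) * Complex.I) by push_cast; ring]
          exact Complex.exp_int_mul_two_pi_mul_I m
        rw [show (((0:ℝ) : ℂ) + 2 * (Real.pi : ℂ)) = ((((0:ℝ) + 2 * Real.pi : ℝ)) : ℂ) by
          push_cast; ring] at h1
        rw [h1]
        simp

lemma integral_chr {m : Fin n → ℤ} (hm : m ≠ 0) :
    ∫ x : Fin n → AddCircle (2 * Real.pi), chr m x = 0 := by
  simp_rw [chr_apply]
  rw [MeasureTheory.volume_pi]
  rw [MeasureTheory.integral_fintype_prod_eq_prod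
    (fun i (x : AddCircle (2 * Real.pi)) => fourier (m i) x)]
  obtain ⟨i, hi⟩ := Function.ne_iff.1 hm
  exact Finset.prod_eq_zero (Finset.mem_univ i) (integral_fourier_eq_zero hi)


lemma integrable_cm (g : C((Fin n → AddCircle (2 * Real.pi)), ℂ)) : Integrable g :=
  g.continuous.integrable_of_hasCompactSupport (HasCompactSupport.of_compactSpace _)

/-- Multidimensional Kronecker theorem. -/
lemma kronecker (v : Fin n → ℝ)
    (hv : LinearIndependent ℚ (Fin.cons Real.pi v : Fin (n+1) → ℝ)) :
    Dense (Set.range fun k : ℤ => fun i => ((k * v i : ℝ) : AddCircle (2 * Real.pi))) := by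
  classical
  set pt : ℤ → (Fin n → AddCircle (2 * Real.pi)) :=
    fun k i => ((k * v i : ℝ) : AddCircle (2 * Real.pi)) with hpt
  by_contra hden
  rw [Metric.dense_iff] at hden
  push_neg at hden
  obtain ⟨x0, r, hr, hball⟩ := hden
  -- the bump function
  set f : C((Fin n → AddCircle (2 * Real.pi)), ℝ) :=
    ⟨fun y => max 0 (1 - dist y x0 / r), by
      apply Continuous.max continuous_const
      exact continuous_const.sub ((continuous_id.dist continuous_const).div_const r)⟩ with hf
  have hfz : ∀ k : ℤ, f (pt k) = 0 := by
    intro k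
    have hnotin : pt k ∉ Metric.ball x0 r := by
      intro h
      have : pt k ∈ Metric.ball x0 r ∩ Set.range pt := ⟨h, ⟨k, rfl⟩⟩
      rw [hball] at this
      exact this
    have hd : r ≤ dist (pt k) x0 := by
      by_contra hlt
      exact hnotin (Metric.mem_ball.2 (lt_of_not_ge hlt))
    show max 0 (1 - dist (pt k) x0 / r) = 0
    apply max_eq_left
    rw [sub_nonpos]
    rw [le_div_iff₀ hr]
    linarith
  have hintf : Integrable (f : (Fin n → AddCircle (2 * Real.pi)) → ℝ) :=
    f.continuous.integrable_of_hasCompactSupport (HasCompactSupport.of_compactSpace _)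
  set I := ∫ y, f y with hIdef
  have hI : 0 < I := by
    rw [hIdef]
    refine (integral_pos_iff_support_of_nonneg (fun y => le_max_left _ _) hintf).2 ?_
    refine lt_of_lt_of_le ?_ (measure_mono
      (show Metric.ball x0 r ⊆ Function.support f from ?_))
    · exact Metric.isOpen_ball.measure_pos _ (Metric.nonempty_ball.2 hr)
    · intro y hy
      rw [Metric.mem_ball] at hy
      have hpos : 0 < 1 - dist y x0 / r := by
        rw [sub_pos, div_lt_one hr]
        exact hy
      have : 0 < f y := lt_of_lt_of_le hpos (le_max_right _ _)
      exact this.ne'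
  set M := (volume (Set.univ : Set (Fin n → AddCircle (2 * Real.pi)))).toReal with hMdef
  have hM : 0 ≤ M := ENNReal.toReal_nonneg
  set ε := I / (2 * M + 1) with hε
  have hεpos : 0 < ε := div_pos hI (by linarith)
  -- complex version of f
  set fC : C((Fin n → AddCircle (2 * Real.pi)), ℂ) :=
    ⟨fun y => ((f y : ℝ) : ℂ), Complex.continuous_ofReal.comp f.continuous⟩ with hfC
  -- approximate by a trigonometric polynomial
  have hmem : fC ∈ closure ((span ℂ (Set.range (chr (n := n))) :
      Submodule ℂ C((Fin n → AddCircle (2 * Real.pi)), ℂ)) : Set _) := by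
    have h1 : fC ∈ (span ℂ (Set.range (chr (n := n)))).topologicalClosure := by
      rw [span_chr_closure_eq_top]
      trivial
    rwa [← Submodule.topologicalClosure_coe]
  obtain ⟨P, hPmem, hPdist⟩ := Metric.mem_closure_iff.1 hmem ε hεpos
  obtain ⟨c, hc⟩ := Finsupp.mem_span_range_iff_exists_finsupp.1 hPmem
  have hPsum : P = ∑ m ∈ c.support, c m • chr m := by rw [← hc]; rfl
  have hPy : ∀ y, P y = ∑ m ∈ c.support, c m • chr m y := by
    intro y
    rw [hPsum]
    simp
  -- frequencies
  set α : (Fin n → ℤ) → ℝ := fun m => ∑ i, (m i : ℝ) * v i with hα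
  set z : (Fin n → ℤ) → ℂ := fun m => Complex.exp ((α m : ℝ) * Complex.I) with hz
  have hz_abs : ∀ m, Complex.abs (z m) = 1 := fun m => Complex.abs_exp_ofReal_mul_I _
  have hchr_pt : ∀ (m : Fin n → ℤ) (k : ℕ), chr m (pt k) = z m ^ k := by
    intro m k
    rw [chr_apply]
    have key : ∀ i, fourier (m i) ((((k : ℤ) : ℝ) * v i : ℝ) : AddCircle (2 * Real.pi))
        = Complex.exp ((((m i : ℝ) * ((k : ℝ) * v i) : ℝ)) * Complex.I) := by
      intro i
      rw [fourier_coe_apply]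
      congr 1
      have hπ : (Real.pi : ℂ) ≠ 0 := by exact_mod_cast Real.pi_ne_zero
      push_cast
      field_simp
    calc (∏ i, fourier (m i) (pt (k : ℤ) i))
        = ∏ i, Complex.exp ((((m i : ℝ) * ((k : ℝ) * v i) : ℝ)) * Complex.I) := by
          apply Finset.prod_congr rfl
          intro i _
          exact key i
      _ = Complex.exp (∑ i, (((m i : ℝ) * ((k : ℝ) * v i) : ℝ)) * Complex.I) :=
          (Complex.exp_sum _ _).symm
      _ = Complex.exp ((k : ℂ) * ((α m : ℝ) * Complex.I)) := by
          congr 1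
          push_cast [hα]
          rw [Finset.sum_mul, Finset.mul_sum]
          apply Finset.sum_congr rfl
          intro i _
          ring
      _ = z m ^ k := by rw [Complex.exp_nat_mul]
  have hz_ne : ∀ m : Fin n → ℤ, m ≠ 0 → z m ≠ 1 := by
    intro m hm h1
    rw [hz] at h1
    rw [Complex.exp_eq_one_iff] at h1
    obtain ⟨N, hN⟩ := h1
    have h2 : (α m : ℝ) = (N : ℝ) * (2 * Real.pi) := by
      have h3 : ((α m : ℝ) : ℂ) = (((N : ℝ) * (2 * Real.pi) : ℝ) : ℂ) := by
        apply mul_right_cancel₀ Complex.I_ne_zero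
        push_cast
        linear_combination hN
      exact_mod_cast h3
    set g : Fin (n+1) → ℚ := Fin.cons (-2 * N) (fun i => (m i : ℚ)) with hg
    have hgsum : ∑ j, g j • (Fin.cons Real.pi v : Fin (n+1) → ℝ) j = 0 := by
      rw [Fin.sum_univ_succ]
      simp only [hg, Fin.cons_zero, Fin.cons_succ, Rat.smul_def]
      push_cast
      rw [show ∑ i : Fin n, (m i : ℝ) * v i = α m from rfl]
      rw [h2]
      push_cast
      ring
    have hall := Fintype.linearIndependent_iff.1 hv g hgsum
    obtain ⟨i, hi⟩ := Function.ne_iff.1 hm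
    have := hall i.succ
    rw [hg, Fin.cons_succ] at this
    exact hi (by exact_mod_cast this)
  -- geometric sums
  set G : (Fin n → ℤ) → ℕ → ℂ := fun m N => ∑ k ∈ Finset.range N, z m ^ k with hG
  set B : (Fin n → ℤ) → ℝ := fun m => if m = 0 then 0 else 2 / Complex.abs (z m - 1) with hB
  have hz0 : z 0 = 1 := by
    rw [hz]
    simp [hα]
  have hGbound : ∀ (m : Fin n → ℤ) (N : ℕ),
      Complex.abs (G m N - (if m = 0 then (N : ℂ) else 0)) ≤ B m := by
    intro m N
    by_cases hm : m = 0
    · subst hm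
      simp [hG, hz0, hB]
    · have hzne := hz_ne m hm
      have hGeq : G m N = (z m ^ N - 1) / (z m - 1) := geom_sum_eq hzne N
      simp only [hB, hm, if_false]
      rw [hGeq, sub_zero, map_div₀]
      have hden : 0 < Complex.abs (z m - 1) :=
        AbsoluteValue.pos _ (sub_ne_zero.2 hzne)
      have hnum : Complex.abs (z m ^ N - 1) ≤ 2 := by
        calc Complex.abs (z m ^ N - 1) ≤ Complex.abs (z m ^ N) + Complex.abs 1 :=
              AbsoluteValue.sub_le_add _ _ _
          _ ≤ 2 := by
              rw [map_pow, hz_abs m]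
              norm_num
      gcongr
  have hBnonneg : ∀ m, 0 ≤ B m := by
    intro m
    rw [hB]
    by_cases hm : m = 0 <;> simp [hm] <;> positivity
  set C : ℝ := ∑ m ∈ c.support, Complex.abs (c m) * B m with hC
  have hCnonneg : 0 ≤ C :=
    Finset.sum_nonneg fun m _ => mul_nonneg (AbsoluteValue.nonneg _ _) (hBnonneg m)
  -- the Birkhoff sums of P
  set A : ℕ → ℂ := fun N => ∑ k ∈ Finset.range N, P (pt k) with hA
  have hA1 : ∀ N : ℕ, Complex.abs (A N) ≤ N * ε := by
    intro N
    rw [hA]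
    calc Complex.abs (∑ k ∈ Finset.range N, P (pt k))
        ≤ ∑ k ∈ Finset.range N, Complex.abs (P (pt k)) := by
          exact AbsoluteValue.sum_le _ _ _
      _ ≤ ∑ _k ∈ Finset.range N, ε := by
          apply Finset.sum_le_sum
          intro k _
          have h1 : Complex.abs (P (pt k)) = dist (fC (pt k)) (P (pt k)) := by
            rw [Complex.dist_eq]
            have : fC (pt k) = 0 := by
              show ((f (pt k) : ℝ) : ℂ) = 0
              rw [hfz k]
              simp
            rw [this]
            rw [zero_sub, norm_neg]
            rfl
          rw [h1]
          exact le_of_lt (lt_of_le_of_lt (ContinuousMap.dist_apply_le_dist _) hPdist)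
      _ = N * ε := by
          rw [Finset.sum_const, Finset.card_range, nsmul_eq_mul]
  have hA2 : ∀ N : ℕ, Complex.abs (A N - (N : ℂ) * c 0) ≤ C := by
    intro N
    have hswap : A N = ∑ m ∈ c.support, c m * G m N := by
      rw [hA]
      simp_rw [hPy]
      rw [Finset.sum_comm]
      apply Finset.sum_congr rfl
      intro m _
      rw [hG, Finset.mul_sum]
      apply Finset.sum_congr rfl
      intro k _
      rw [smul_eq_mul, hchr_pt m k]
  -- rewrite N * c 0 as a sum over the support
    have hNc0 : (N : ℂ) * c 0 = ∑ m ∈ c.support, (if m = 0 then (N : ℂ) * c m else 0) := by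
      rw [Finset.sum_ite_eq' c.support 0 (fun m => (N : ℂ) * c m)]
      by_cases h0 : (0 : Fin n → ℤ) ∈ c.support
      · rw [if_pos h0]
      · rw [if_neg h0]
        rw [Finsupp.notMem_support_iff.1 h0]
        ring
    rw [hswap, hNc0, ← Finset.sum_sub_distrib]
    calc Complex.abs (∑ m ∈ c.support, (c m * G m N - if m = 0 then (N : ℂ) * c m else 0))
        ≤ ∑ m ∈ c.support,
            Complex.abs (c m * G m N - if m = 0 then (N : ℂ) * c m else 0) :=
          AbsoluteValue.sum_le _ _ _
      _ ≤ C := by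
          rw [hC]
          apply Finset.sum_le_sum
          intro m _
          have : c m * G m N - (if m = 0 then (N : ℂ) * c m else 0)
              = c m * (G m N - (if m = 0 then (N : ℂ) else 0)) := by
            by_cases hm : m = 0 <;> simp [hm] <;> ring
          rw [this, AbsoluteValue.map_mul]
          exact mul_le_mul_of_nonneg_left (hGbound m N) (AbsoluteValue.nonneg _ _)
  -- conclude |c 0| ≤ ε
  have hc0 : Complex.abs (c 0) ≤ ε := by
    by_contra hgt
    push_neg at hgt
    have hd : 0 < Complex.abs (c 0) - ε := by linarith
    obtain ⟨N, hN⟩ := exists_nat_gt (C / (Complex.abs (c 0) - ε))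
    have hNC : C < N * (Complex.abs (c 0) - ε) := by
      rw [div_lt_iff₀ hd] at hN
      exact hN
    have hup : (N : ℝ) * Complex.abs (c 0) ≤ N * ε + C := by
      have e2 : (N : ℂ) * c 0 = A N - (A N - (N : ℂ) * c 0) := by ring
      calc (N : ℝ) * Complex.abs (c 0) = Complex.abs ((N : ℂ) * c 0) := by
            rw [AbsoluteValue.map_mul, Complex.abs_natCast]
        _ = Complex.abs (A N - (A N - (N : ℂ) * c 0)) := by rw [← e2]
        _ ≤ Complex.abs (A N) + Complex.abs (A N - (N : ℂ) * c 0) :=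
            AbsoluteValue.sub_le_add _ _ _
        _ ≤ N * ε + C := add_le_add (hA1 N) (hA2 N)
    nlinarith [hA1 N, hA2 N]
  -- integral of P
  have hint_chr : ∀ m : Fin n → ℤ,
      (∫ y, chr m y) = (if m = 0 then (M : ℂ) else 0) := by
    intro m
    by_cases hm : m = 0
    · subst hm
      rw [if_pos rfl]
      have : ∀ y : Fin n → AddCircle (2 * Real.pi), chr (0 : Fin n → ℤ) y = 1 := by
        intro y
        rw [chr_zero]
        rfl
      simp_rw [this]
      rw [MeasureTheory.integral_const]
      rw [hMdef]
      simp
      rfl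
    · rw [if_neg hm]
      exact integral_chr hm
  have hintP : (∫ y, P y) = (c 0 : ℂ) * M := by
    have h1 : (∫ y, P y) = ∑ m ∈ c.support, c m • ∫ y, chr m y := by
      simp_rw [hPy]
      rw [MeasureTheory.integral_finset_sum]
      · apply Finset.sum_congr rfl
        intro m _
        rw [MeasureTheory.integral_smul]
      · intro m _
        exact (integrable_cm (chr m)).smul (c m)
    rw [h1]
    simp_rw [hint_chr, smul_ite, smul_zero]
    rw [Finset.sum_ite_eq' c.support 0 (fun m => c m • (M : ℂ))]
    by_cases h0 : (0 : Fin n → ℤ) ∈ c.support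
    · rw [if_pos h0, smul_eq_mul]
    · rw [if_neg h0, Finsupp.notMem_support_iff.1 h0]
      ring
  -- integral comparison
  have hfCint : (∫ y, fC y) = ((I : ℝ) : ℂ) := by
    rw [hIdef]
    exact integral_ofReal
  have hdiff : Complex.abs ((∫ y, fC y) - ∫ y, P y) ≤ ε * M := by
    rw [← MeasureTheory.integral_sub (integrable_cm fC) (integrable_cm P)]
    have := MeasureTheory.norm_integral_le_of_norm_le_const
      (μ := volume) (f := fun y => fC y - P y) (C := ε)
      (Filter.Eventually.of_forall fun y => by
        have h1 : ‖fC y - P y‖ = dist (fC y) (P y) := by rw [dist_eq_norm]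
        rw [h1]
        exact le_of_lt (lt_of_le_of_lt (ContinuousMap.dist_apply_le_dist _) hPdist))
    exact this
  have hfinal : I ≤ 2 * ε * M := by
    have h1 : Complex.abs ((I : ℝ) : ℂ) = I := by
      rw [Complex.abs_ofReal, abs_of_pos hI]
    calc I = Complex.abs ((I : ℝ) : ℂ) := h1.symm
      _ ≤ Complex.abs (∫ y, P y) + Complex.abs ((∫ y, fC y) - ∫ y, P y) := by
          rw [← hfCint]
          have := AbsoluteValue.sub_le_add Complex.abs ((∫ y, fC y) - ∫ y, P y) (- ∫ y, P y)
          calc Complex.abs (∫ y, fC y)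
              = Complex.abs (((∫ y, fC y) - ∫ y, P y) + ∫ y, P y) := by ring_nf
            _ ≤ Complex.abs ((∫ y, fC y) - ∫ y, P y) + Complex.abs (∫ y, P y) :=
                AbsoluteValue.add_le _ _ _
            _ = _ := add_comm _ _
      _ ≤ Complex.abs (c 0) * M + ε * M := by
          apply add_le_add _ hdiff
          rw [hintP, AbsoluteValue.map_mul, Complex.abs_ofReal, abs_of_nonneg hM]
      _ ≤ ε * M + ε * M := by
          apply add_le_add _ le_rfl
          exact mul_le_mul_of_nonneg_right hc0 hM
      _ = 2 * ε * M := by ring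
  have hεM : ε * (2 * M + 1) = I := div_mul_cancel₀ _ (by linarith)
  nlinarith [hεpos, hfinal, hεM]


/-- Points of the torus admitting a "generic" lift are dense. -/
lemma dense_generic :
    Dense {p : Fin n → AddCircle (2 * Real.pi) |
      ∃ w : Fin n → ℝ, (∀ i, p i = (w i : AddCircle (2 * Real.pi))) ∧
        LinearIndependent ℚ (Fin.cons Real.pi w : Fin (n+1) → ℝ)} := by
  classical
  set W : Set (Fin n → ℝ) :=
    {w | LinearIndependent ℚ (Fin.cons Real.pi w : Fin (n+1) → ℝ)} with hW
  -- each nontrivial rational relation defines a null set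
  have hnull : ∀ (a : ℚ) (b : Fin n → ℚ), b ≠ 0 →
      volume {w : Fin n → ℝ | (a : ℝ) * Real.pi + ∑ i, (b i : ℝ) * w i = 0} = 0 := by
    intro a b hb
    set L : (Fin n → ℝ) →ₗ[ℝ] ℝ := ∑ i, (b i : ℝ) • (LinearMap.proj i) with hL
    have hLapp : ∀ w, L w = ∑ i, (b i : ℝ) * w i := by
      intro w
      rw [hL]
      simp [LinearMap.sum_apply, LinearMap.proj_apply, smul_eq_mul]
    have hLne : LinearMap.ker L ≠ ⊤ := by
      obtain ⟨i0, hi0⟩ := Function.ne_iff.1 hb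
      intro htop
      have h1 : L (Pi.single i0 1) = 0 := by
        rw [← LinearMap.mem_ker, htop]
        trivial
      rw [hLapp] at h1
      rw [Finset.sum_eq_single i0] at h1
      · simp only [Pi.single_eq_same, mul_one] at h1
        exact hi0 (by exact_mod_cast h1)
      · intro j _ hj
        simp [Pi.single_eq_of_ne hj]
      · simp
    set H := {w : Fin n → ℝ | (a : ℝ) * Real.pi + ∑ i, (b i : ℝ) * w i = 0} with hH
    rcases Set.eq_empty_or_nonempty H with hemp | ⟨w0, hw0⟩
    · rw [hemp]
      exact measure_empty
    · have hset : H = (fun w => w + (- w0)) ⁻¹' (LinearMap.ker L : Set (Fin n → ℝ)) := by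
        ext w
        simp only [hH, Set.mem_setOf_eq, Set.mem_preimage, SetLike.mem_coe,
          LinearMap.mem_ker]
        rw [← sub_eq_add_neg, map_sub, hLapp, hLapp]
        have hw0' : (a : ℝ) * Real.pi + ∑ i, (b i : ℝ) * w0 i = 0 := hw0
        constructor
        · intro h
          have : ∑ i, (b i : ℝ) * w i = ∑ i, (b i : ℝ) * w0 i := by linarith
          rw [this]
          ring
        · intro h
          have : ∑ i, (b i : ℝ) * w i = ∑ i, (b i : ℝ) * w0 i := by linarith
          linarith
      rw [hset, measure_preimage_add_right]
      exact MeasureTheory.Measure.addHaar_submodule volume (LinearMap.ker L) hLne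
  have hWc : volume Wᶜ = 0 := by
    have hsub : Wᶜ ⊆ ⋃ (q : ℚ × {b : Fin n → ℚ // b ≠ 0}),
        {w : Fin n → ℝ | (q.1 : ℝ) * Real.pi + ∑ i, (q.2.1 i : ℝ) * w i = 0} := by
      intro w hw
      have hw' : ¬ LinearIndependent ℚ (Fin.cons Real.pi w : Fin (n+1) → ℝ) := hw
      rw [Fintype.not_linearIndependent_iff] at hw'
      obtain ⟨g, hgsum, i, hi⟩ := hw'
      have hsum : (g 0 : ℝ) * Real.pi + ∑ i : Fin n, (g i.succ : ℝ) * w i = 0 := by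
        rw [Fin.sum_univ_succ] at hgsum
        simp only [Fin.cons_zero, Fin.cons_succ, Rat.smul_def] at hgsum
        exact hgsum
      have hbne : (fun i : Fin n => g i.succ) ≠ 0 := by
        intro hb0
        have hg0 : g 0 = 0 := by
          have : ∀ i : Fin n, g i.succ = 0 := fun i => congrFun hb0 i
          rw [Fin.sum_univ_succ] at hgsum
          simp only [Fin.cons_zero, Fin.cons_succ, Rat.smul_def] at hgsum
          have hz : ∑ i : Fin n, (g i.succ : ℝ) * w i = 0 := by
            apply Finset.sum_eq_zero
            intro i _
            rw [this i]
            simp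
          rw [hz, add_zero] at hgsum
          have := mul_eq_zero.1 hgsum
          rcases this with h | h
          · exact_mod_cast h
          · exact absurd h Real.pi_ne_zero
        rcases Fin.eq_zero_or_eq_succ i with rfl | ⟨j, rfl⟩
        · exact hi hg0
        · exact hi (congrFun hb0 j)
      exact Set.mem_iUnion.2 ⟨⟨g 0, ⟨fun i => g i.succ, hbne⟩⟩, hsum⟩
    exact measure_mono_null hsub
      (measure_iUnion_null fun q => hnull q.1 q.2.1 q.2.2)
  have hWdense : Dense W := by
    rw [Metric.dense_iff]
    intro x r hr
    by_contra hne
    rw [Set.not_nonempty_iff_eq_empty] at hne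
    have hsub2 : Metric.ball x r ⊆ Wᶜ := by
      intro y hy
      by_contra hyW
      rw [Set.notMem_compl_iff] at hyW
      have : y ∈ Metric.ball x r ∩ W := ⟨hy, hyW⟩
      rw [hne] at this
      exact this
    exact (Metric.isOpen_ball.measure_pos volume (Metric.nonempty_ball.2 hr)).ne'
      (measure_mono_null hsub2 hWc)
  -- push forward to the torus
  set q : (Fin n → ℝ) → (Fin n → AddCircle (2 * Real.pi)) :=
    fun w i => (w i : AddCircle (2 * Real.pi)) with hq
  have hqcont : Continuous q := by
    apply continuous_pi
    intro i
    exact (AddCircle.continuous_mk' _).comp (continuous_apply i)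
  have hqsurj : Function.Surjective q := by
    intro p
    have : ∀ i, ∃ x : ℝ, (x : AddCircle (2 * Real.pi)) = p i :=
      fun i => QuotientAddGroup.mk_surjective (p i)
    choose w hwp using this
    exact ⟨w, funext hwp⟩
  have := (hqsurj.denseRange.dense_image hqcont hWdense)
  refine this.mono ?_
  rintro - ⟨w, hwW, rfl⟩
  exact ⟨w, fun i => rfl, hwW⟩

end GenusOneAux

open GenusOneAux in
/-- Genus-one density theorem (direct, Ratner-free case): for `Θ_{ij} = λ_i θ_j` with
`1, λ_2, …, λ_n` linearly independent over `ℚ` and each family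
`π, θ_j, λ_2 θ_j, …, λ_n θ_j` (for `j = 1, 2`) linearly independent over `ℚ`,
the `SL(2,ℤ)`-orbit of `[Θ]` is dense in `M(n, 2; 𝕋)`. -/
theorem genus_one_orbit_dense {n : ℕ} (hn : 1 ≤ n)
    (lam : Fin n → ℝ) (hlam1 : lam ⟨0, hn⟩ = 1) (hlam : LinearIndependent ℚ lam)
    (θ1 θ2 : ℝ)
    (h1 : LinearIndependent ℚ
      (Fin.cons Real.pi (fun i : Fin n => lam i * θ1) : Fin (n + 1) → ℝ))
    (h2 : LinearIndependent ℚ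
      (Fin.cons Real.pi (fun i : Fin n => lam i * θ2) : Fin (n + 1) → ℝ)) :
    Dense {X : Fin n → Fin 2 → AddCircle (2 * Real.pi) |
      ∃ A : Matrix (Fin 2) (Fin 2) ℤ, A.det = 1 ∧
        X = fun i j =>
          ((∑ l, (lam i * (![θ1, θ2] l)) * (A l j : ℝ) : ℝ) : AddCircle (2 * Real.pi))} := by
  classical
  haveI : Fact (0 < 2 * Real.pi) := ⟨by positivity⟩
  set a : Fin n → ℝ := fun i => lam i * θ1 with ha
  set b : Fin n → ℝ := fun i => lam i * θ2 with hb
  set O : Set (Fin n → Fin 2 → AddCircle (2 * Real.pi)) :=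
    {X : Fin n → Fin 2 → AddCircle (2 * Real.pi) |
      ∃ A : Matrix (Fin 2) (Fin 2) ℤ, A.det = 1 ∧
        X = fun i j =>
          ((∑ l, (lam i * (![θ1, θ2] l)) * (A l j : ℝ) : ℝ) : AddCircle (2 * Real.pi))} with hO
  -- Step A : points obtained from upper unipotent matrices
  have hNmem : ∀ m : ℤ, (fun i (j : Fin 2) =>
      ![((a i : ℝ) : AddCircle (2 * Real.pi)),
        ((m * a i + b i : ℝ) : AddCircle (2 * Real.pi))] j) ∈ O := by
    intro m
    refine ⟨!![1, m; 0, 1], by simp [Matrix.det_fin_two_of], ?_⟩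
    funext i j
    fin_cases j
    · show ((a i : ℝ) : AddCircle (2 * Real.pi)) = _
      congr 1
      simp [Fin.sum_univ_two, ha]
    · show ((m * a i + b i : ℝ) : AddCircle (2 * Real.pi)) = _
      congr 1
      simp [Fin.sum_univ_two, ha, hb]
      push_cast
      ring
  -- Step B : the closure of the orbit is stable under lower unipotent matrices
  have hstab : ∀ (k : ℤ) (X : Fin n → Fin 2 → AddCircle (2 * Real.pi)), X ∈ closure O →
      (fun i (j : Fin 2) => ![X i 0 + k • X i 1, X i 1] j) ∈ closure O := by
    intro k X hX
    set Φ : (Fin n → Fin 2 → AddCircle (2 * Real.pi)) →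
        (Fin n → Fin 2 → AddCircle (2 * Real.pi)) :=
      fun Y => fun i (j : Fin 2) => ![Y i 0 + k • Y i 1, Y i 1] j with hΦ
    have hcont : Continuous Φ := by
      apply continuous_pi
      intro i
      apply continuous_pi
      intro j
      fin_cases j
      · show Continuous fun Y : Fin n → Fin 2 → AddCircle (2 * Real.pi) =>
          Y i 0 + k • Y i 1
        refine Continuous.add ?_ ?_
        · exact (continuous_apply (0 : Fin 2)).comp (continuous_apply i)
        · exact Continuous.zsmul ((continuous_apply (1 : Fin 2)).comp (continuous_apply i)) k
      · show Continuous fun Y : Fin n → Fin 2 → AddCircle (2 * Real.pi) => Y i 1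
        exact (continuous_apply (1 : Fin 2)).comp (continuous_apply i)
    have himg : Φ '' O ⊆ O := by
      rintro - ⟨Y, ⟨A, hdet, rfl⟩, rfl⟩
      refine ⟨A * !![1, 0; k, 1], ?_, ?_⟩
      · rw [Matrix.det_mul, hdet]
        simp [Matrix.det_fin_two_of]
      · funext i j
        fin_cases j
        · show (((∑ l, (lam i * (![θ1, θ2] l)) * (A l 0 : ℝ) : ℝ) : AddCircle (2 * Real.pi))
            + k • ((∑ l, (lam i * (![θ1, θ2] l)) * (A l 1 : ℝ) : ℝ) : AddCircle (2 * Real.pi))) = _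
          rw [← QuotientAddGroup.mk_zsmul, ← QuotientAddGroup.mk_add]
          congr 1
          simp [Matrix.mul_apply, Fin.sum_univ_two]
          push_cast [zsmul_eq_mul]
          ring
        · show ((∑ l, (lam i * (![θ1, θ2] l)) * (A l 1 : ℝ) : ℝ) : AddCircle (2 * Real.pi)) = _
          congr 1
          simp [Matrix.mul_apply, Fin.sum_univ_two]
    exact closure_mono himg (image_closure_subset_closure_image hcont ⟨X, hX, rfl⟩)
  -- Step C : all points with first column `a` are in the closure
  have hclaim1 : ∀ p : Fin n → AddCircle (2 * Real.pi),
      (fun i (j : Fin 2) => ![((a i : ℝ) : AddCircle (2 * Real.pi)), p i] j) ∈ closure O := by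
    intro p
    rw [Metric.mem_closure_iff]
    intro ε hε
    have hdense : DenseRange
        (fun m : ℤ => fun i => ((m * a i + b i : ℝ) : AddCircle (2 * Real.pi))) := by
      have hk : DenseRange (fun m : ℤ => fun i => ((m * a i : ℝ) : AddCircle (2 * Real.pi))) :=
        kronecker a h1
      have hcomp : (fun m : ℤ => fun i => ((m * a i + b i : ℝ) : AddCircle (2 * Real.pi)))
          = (fun z => z + fun i => ((b i : ℝ) : AddCircle (2 * Real.pi)))
            ∘ (fun m : ℤ => fun i => ((m * a i : ℝ) : AddCircle (2 * Real.pi))) := by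
        funext m
        funext i
        show ((m * a i + b i : ℝ) : AddCircle (2 * Real.pi))
          = ((m * a i : ℝ) : AddCircle (2 * Real.pi)) + ((b i : ℝ) : AddCircle (2 * Real.pi))
        norm_cast
      rw [hcomp]
      exact DenseRange.comp
        ((Equiv.addRight (fun i => ((b i : ℝ) : AddCircle (2 * Real.pi)))).surjective.denseRange)
        hk (continuous_id.add continuous_const)
    obtain ⟨m, hm⟩ := hdense.exists_dist_lt p hε
    refine ⟨_, hNmem m, ?_⟩
    rw [dist_pi_lt_iff hε]
    intro i
    rw [dist_pi_lt_iff hε]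
    intro j
    fin_cases j
    · simpa using hε
    · show dist (p i) (((m * a i + b i : ℝ) : AddCircle (2 * Real.pi))) < ε
      calc dist (p i) (((m * a i + b i : ℝ) : AddCircle (2 * Real.pi)))
          ≤ dist p (fun i => ((m * a i + b i : ℝ) : AddCircle (2 * Real.pi))) :=
            dist_le_pi_dist p (fun i => ((m * a i + b i : ℝ) : AddCircle (2 * Real.pi))) i
        _ < ε := hm
  -- Step D : conclusion
  intro X
  have hX2 : X ∈ closure (closure O) := by
    rw [Metric.mem_closure_iff]
    intro ε hε
    obtain ⟨p, hpball, w, hwp, hwind⟩ :=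
      Metric.dense_iff.1 (dense_generic (n := n)) (fun i => X i 1) ε hε
    rw [Metric.mem_ball] at hpball
    have hkw : DenseRange (fun k : ℤ => fun i => ((k * w i : ℝ) : AddCircle (2 * Real.pi))) :=
      kronecker w hwind
    have hd2 : DenseRange (fun k : ℤ => fun i =>
        ((a i : ℝ) : AddCircle (2 * Real.pi)) + ((k * w i : ℝ) : AddCircle (2 * Real.pi))) := by
      have hcomp : (fun k : ℤ => fun i =>
          ((a i : ℝ) : AddCircle (2 * Real.pi)) + ((k * w i : ℝ) : AddCircle (2 * Real.pi)))
          = (fun z => (fun i => ((a i : ℝ) : AddCircle (2 * Real.pi))) + z)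
            ∘ (fun k : ℤ => fun i => ((k * w i : ℝ) : AddCircle (2 * Real.pi))) := rfl
      rw [hcomp]
      exact DenseRange.comp
        ((Equiv.addLeft (fun i => ((a i : ℝ) : AddCircle (2 * Real.pi)))).surjective.denseRange)
        hkw (continuous_add_left _)
    obtain ⟨k, hk⟩ := hd2.exists_dist_lt (fun i => X i 0) hε
    have hY : (fun i (j : Fin 2) =>
        ![((a i : ℝ) : AddCircle (2 * Real.pi)) + k • p i, p i] j) ∈ closure O := by
      exact hstab k _ (hclaim1 p)
    refine ⟨_, hY, ?_⟩
    rw [dist_pi_lt_iff hε]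
    intro i
    rw [dist_pi_lt_iff hε]
    intro j
    have hkp : k • p i = ((k * w i : ℝ) : AddCircle (2 * Real.pi)) := by
      rw [hwp i, ← QuotientAddGroup.mk_zsmul]
      congr 1
      simp [zsmul_eq_mul]
    fin_cases j
    · show dist (X i 0) (((a i : ℝ) : AddCircle (2 * Real.pi)) + k • p i) < ε
      rw [hkp]
      calc dist (X i 0) (((a i : ℝ) : AddCircle (2 * Real.pi))
            + ((k * w i : ℝ) : AddCircle (2 * Real.pi)))
          ≤ dist (fun i => X i 0) (fun i => ((a i : ℝ) : AddCircle (2 * Real.pi))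
            + ((k * w i : ℝ) : AddCircle (2 * Real.pi))) :=
            dist_le_pi_dist (fun i => X i 0) (fun i => ((a i : ℝ) : AddCircle (2 * Real.pi))
              + ((k * w i : ℝ) : AddCircle (2 * Real.pi))) i
        _ < ε := hk
    · show dist (X i 1) (p i) < ε
      calc dist (X i 1) (p i) ≤ dist (fun i => X i 1) p := dist_le_pi_dist (fun i => X i 1) p i
        _ < ε := by rw [dist_comm]; exact hpball
  rwa [closure_closure] at hX2
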